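/- Let ℓ be an odd prime. The set of indices [GL₂(ℤ/ℓℤ) : G] over subgroups G of GL₂(ℤ/ℓℤ) that belong to the ramified Cartan subgroup C_r(ℓ) equals the set of positive integers divisible by ℓ² − 1 and dividing (ℓ+1)(ℓ−1)². -/

import Mathlib

open Matrix

abbrev GL2 (ℓ : ℕ) : Type := GL (Fin 2) (ZMod ℓ)

namespace Paper

/-- The underlying matrix of an element of `GL₂(ℤ/ℓℤ)`. -/
def mat {ℓ : ℕ} (g : GL2 ℓ) : Matrix (Fin 2) (Fin 2) (ZMod ℓ) := ↑g

/-- The set of scalar matrices `Z(ℓ)`. -/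
def ZSet (ℓ : ℕ) : Set (GL2 ℓ) :=
  { g | ∃ x : ZMod ℓ, mat g = x • (1 : Matrix (Fin 2) (Fin 2) (ZMod ℓ)) }

/-- The split Cartan `C_s(ℓ)`: invertible diagonal matrices. -/
def CsSet (ℓ : ℕ) : Set (GL2 ℓ) := { g | mat g 0 1 = 0 ∧ mat g 1 0 = 0 }

/-- The normalizer `N_s(ℓ)` of the split Cartan: diagonal and antidiagonal matrices. -/
def NsSet (ℓ : ℕ) : Set (GL2 ℓ) :=
  CsSet ℓ ∪ { g | mat g 0 0 = 0 ∧ mat g 1 1 = 0 }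

/-- The nonsplit Cartan `C_ns(ℓ)` relative to the nonsquare `ε`. -/
def CnsSet (ℓ : ℕ) (ε : ZMod ℓ) : Set (GL2 ℓ) :=
  { g | ∃ x y : ZMod ℓ, mat g = !![x, ε * y; y, x] }

/-- The normalizer `N_ns(ℓ)` of the nonsplit Cartan. -/
def NnsSet (ℓ : ℕ) (ε : ZMod ℓ) : Set (GL2 ℓ) :=
  CnsSet ℓ ε ∪ { g | ∃ x y : ZMod ℓ, mat g = !![x, -(ε * y); y, -x] }

/-- The ramified Cartan `C_r(ℓ)`. -/
def CrSet (ℓ : ℕ) : Set (GL2 ℓ) :=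
  { g | mat g 1 0 = 0 ∧ mat g 0 0 = mat g 1 1 }

/-- The Borel subgroup `B(ℓ)`: upper triangular matrices. -/
def BorelSet (ℓ : ℕ) : Set (GL2 ℓ) := { g | mat g 1 0 = 0 }

/-- `G` is conjugate in `GL₂(ℤ/ℓℤ)` to a subgroup of the set `M`. -/
def ConjSub {ℓ : ℕ} (G : Subgroup (GL2 ℓ)) (M : Set (GL2 ℓ)) : Prop :=
  ∃ a : GL2 ℓ, ∀ g ∈ G, a * g * a⁻¹ ∈ M

/-- `G` belongs to `Z(ℓ)`. -/
def BelongsZ {ℓ : ℕ} (G : Subgroup (GL2 ℓ)) : Prop := ConjSub G (ZSet ℓ)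

/-- `G` belongs to `C_s(ℓ)`. -/
def BelongsCs {ℓ : ℕ} (G : Subgroup (GL2 ℓ)) : Prop :=
  ConjSub G (CsSet ℓ) ∧ ¬ ConjSub G (ZSet ℓ)

/-- `G` belongs to `C_ns(ℓ)`. -/
def BelongsCns {ℓ : ℕ} (ε : ZMod ℓ) (G : Subgroup (GL2 ℓ)) : Prop :=
  ConjSub G (CnsSet ℓ ε) ∧ ¬ ConjSub G (ZSet ℓ)

/-- `G` belongs to `N_s(ℓ)`. -/
def BelongsNs {ℓ : ℕ} (G : Subgroup (GL2 ℓ)) : Prop :=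
  ConjSub G (NsSet ℓ) ∧ ¬ ConjSub G (CsSet ℓ)

/-- `G` belongs to `N_ns(ℓ)`. -/
def BelongsNns {ℓ : ℕ} (ε : ZMod ℓ) (G : Subgroup (GL2 ℓ)) : Prop :=
  ConjSub G (NnsSet ℓ ε) ∧ ¬ ConjSub G (CnsSet ℓ ε)

/-- `G` belongs to the ramified Cartan `C_r(ℓ)`. -/
def BelongsCr {ℓ : ℕ} (G : Subgroup (GL2 ℓ)) : Prop :=
  ConjSub G (CrSet ℓ) ∧ ¬ ConjSub G (ZSet ℓ)

/-- `H` is a twist of `G`: either `H = ⟨G, -I⟩`, or `H` is an index-2 subgroup of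
`⟨G, -I⟩` not containing `-I`. -/
def TwistOf {ℓ : ℕ} (G H : Subgroup (GL2 ℓ)) : Prop :=
  H = G ⊔ Subgroup.closure {(-1 : GL2 ℓ)} ∨
    (H ≤ G ⊔ Subgroup.closure {(-1 : GL2 ℓ)} ∧
      H.relIndex (G ⊔ Subgroup.closure {(-1 : GL2 ℓ)}) = 2 ∧
      (-1 : GL2 ℓ) ∉ H)

/-- `H` fixes a nonzero vector of `(ℤ/ℓℤ)²`. -/
def FixesVec {ℓ : ℕ} (H : Subgroup (GL2 ℓ)) : Prop :=
  ∃ v : Fin 2 → ZMod ℓ, v ≠ 0 ∧ ∀ h ∈ H, Matrix.mulVec (mat h) v = v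

section Aux

variable {ℓ : ℕ} [Fact ℓ.Prime]

lemma mat_mul (g h : GL2 ℓ) : mat (g * h) = mat g * mat h := rfl
lemma mat_one : mat (1 : GL2 ℓ) = 1 := rfl
lemma mat_pow (g : GL2 ℓ) (n : ℕ) : mat (g ^ n) = (mat g) ^ n :=
  Units.val_pow_eq_pow_val g n

lemma mul_entries (M N : Matrix (Fin 2) (Fin 2) (ZMod ℓ)) (i j : Fin 2) :
    (M * N) i j = M i 0 * N 0 j + M i 1 * N 1 j := by
  rw [Matrix.mul_apply, Fin.sum_univ_two]

/-- key facts about inverses of elements of CrSet -/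
lemma cr_inv {g : GL2 ℓ} (hg : g ∈ CrSet ℓ) :
    mat g⁻¹ 1 0 = 0 ∧ mat g⁻¹ 0 0 = mat g⁻¹ 1 1 ∧ mat g 0 0 * mat g⁻¹ 0 0 = 1 := by
  obtain ⟨h10, hd⟩ := hg
  set M := mat g with hM
  set N := mat g⁻¹ with hN
  have hMN : M * N = 1 := by rw [hM, hN, ← mat_mul, mul_inv_cancel, mat_one]
  have hNM : N * M = 1 := by rw [hM, hN, ← mat_mul, inv_mul_cancel, mat_one]
  have ha : M 0 0 ≠ 0 := by
    intro h0
    have hdet : M.det * N.det = 1 := by rw [← Matrix.det_mul, hMN, Matrix.det_one]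
    rw [Matrix.det_fin_two, h10, hd] at hdet
    rw [← hd, h0] at hdet
    simp at hdet
  have e10 : N 1 0 * M 0 0 + N 1 1 * M 1 0 = 0 := by
    have := congrFun (congrFun hNM 1) 0
    rwa [mul_entries, Matrix.one_apply_ne (by decide)] at this
  rw [h10, mul_zero, add_zero] at e10
  have hN10 : N 1 0 = 0 := by
    rcases mul_eq_zero.mp e10 with h | h
    · exact h
    · exact absurd h ha
  have e00 : M 0 0 * N 0 0 + M 0 1 * N 1 0 = 1 := by
    have := congrFun (congrFun hMN 0) 0
    rwa [mul_entries, Matrix.one_apply_eq] at this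
  rw [hN10, mul_zero, add_zero] at e00
  have e11 : M 1 0 * N 0 1 + M 1 1 * N 1 1 = 1 := by
    have := congrFun (congrFun hMN 1) 1
    rwa [mul_entries, Matrix.one_apply_eq] at this
  rw [h10, zero_mul, zero_add, ← hd] at e11
  refine ⟨hN10, ?_, e00⟩
  exact mul_left_cancel₀ ha (e00.trans e11.symm)

/-- the matrix power formula -/
lemma tri_pow (a b : ZMod ℓ) (n : ℕ) :
    (!![a, b; 0, a]) ^ (n + 1) = !![a ^ (n+1), (n+1 : ℕ) * a ^ n * b; 0, a ^ (n+1)] := by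
  induction n with
  | zero => simp
  | succ m ih =>
    rw [pow_succ, ih, Matrix.mul_fin_two]
    congr 1 <;> push_cast <;> ring

lemma mk_mul (a ai b : ZMod ℓ) (h : a * ai = 1) :
    !![a, a * b; 0, a] * !![ai, ai * (-b); 0, ai] = 1 := by
  have e00 : a * ai + a * b * 0 = 1 := by linear_combination h
  have e01 : a * (ai * -b) + a * b * ai = 0 := by ring
  have e10 : (0:ZMod ℓ) * ai + a * 0 = 0 := by ring
  have e11 : (0:ZMod ℓ) * (ai * -b) + a * ai = 1 := by linear_combination h
  rw [Matrix.mul_fin_two, e00, e01, e10, e11, Matrix.one_fin_two]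

/-- conjugate of g being scalar forces g scalar -/
lemma conj_scalar {c g : GL2 ℓ} {x : ZMod ℓ}
    (h : mat (c * g * c⁻¹) = x • (1 : Matrix (Fin 2) (Fin 2) (ZMod ℓ))) :
    mat g = x • (1 : Matrix (Fin 2) (Fin 2) (ZMod ℓ)) := by
  have h2 : mat c * mat g * mat c⁻¹ = x • 1 := by rw [← mat_mul, ← mat_mul]; exact h
  have hcc : mat c⁻¹ * mat c = 1 := by rw [← mat_mul, inv_mul_cancel, mat_one]
  calc mat g = (mat c⁻¹ * mat c) * mat g * (mat c⁻¹ * mat c) := by rw [hcc]; simp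
    _ = mat c⁻¹ * (mat c * mat g * mat c⁻¹) * mat c := by noncomm_ring
    _ = mat c⁻¹ * (x • 1) * mat c := by rw [h2]
    _ = x • (mat c⁻¹ * mat c) := by
        rw [mul_smul_comm, smul_mul_assoc, mul_one]
    _ = x • 1 := by rw [hcc]

/-- the embedding of `F^× × F` into `GL2` with image the ramified Cartan -/
def θ (ℓ : ℕ) [Fact ℓ.Prime] : (ZMod ℓ)ˣ × Multiplicative (ZMod ℓ) →* GL2 ℓ where
  toFun p := ⟨!![(p.1 : ZMod ℓ), (p.1 : ZMod ℓ) * p.2.toAdd; 0, (p.1 : ZMod ℓ)],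
              !![((p.1⁻¹ : (ZMod ℓ)ˣ) : ZMod ℓ),
                 ((p.1⁻¹ : (ZMod ℓ)ˣ) : ZMod ℓ) * (- p.2.toAdd); 0,
                 ((p.1⁻¹ : (ZMod ℓ)ˣ) : ZMod ℓ)],
              mk_mul (p.1 : ZMod ℓ) ((p.1⁻¹ : (ZMod ℓ)ˣ) : ZMod ℓ) p.2.toAdd
                (by rw [← Units.val_mul, mul_inv_cancel, Units.val_one]),
              by have := mk_mul ((p.1⁻¹ : (ZMod ℓ)ˣ) : ZMod ℓ) (p.1 : ZMod ℓ) (- p.2.toAdd)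
                   (by rw [← Units.val_mul, inv_mul_cancel, Units.val_one])
                 rwa [neg_neg] at this⟩
  map_one' := by
    refine Units.ext ?_
    show (!![((1 : (ZMod ℓ)ˣ) : ZMod ℓ), ((1 : (ZMod ℓ)ˣ) : ZMod ℓ) * (1 : Multiplicative (ZMod ℓ)).toAdd; 0,
        ((1 : (ZMod ℓ)ˣ) : ZMod ℓ)] : Matrix (Fin 2) (Fin 2) (ZMod ℓ)) = 1
    simp [Matrix.one_fin_two]
  map_mul' p q := by
    refine Units.ext ?_
    show (!![((p.1 * q.1 : (ZMod ℓ)ˣ) : ZMod ℓ), ((p.1 * q.1 : (ZMod ℓ)ˣ) : ZMod ℓ) * (p.2 * q.2).toAdd; 0,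
        ((p.1 * q.1 : (ZMod ℓ)ˣ) : ZMod ℓ)] : Matrix (Fin 2) (Fin 2) (ZMod ℓ)) =
      !![(p.1 : ZMod ℓ), (p.1 : ZMod ℓ) * p.2.toAdd; 0, (p.1 : ZMod ℓ)] *
        !![(q.1 : ZMod ℓ), (q.1 : ZMod ℓ) * q.2.toAdd; 0, (q.1 : ZMod ℓ)]
    rw [Matrix.mul_fin_two, toAdd_mul, Units.val_mul]
    congr 1 <;> push_cast <;> ring_nf

lemma mat_θ (p : (ZMod ℓ)ˣ × Multiplicative (ZMod ℓ)) :
    mat (θ ℓ p) = !![(p.1 : ZMod ℓ), (p.1 : ZMod ℓ) * p.2.toAdd; 0, (p.1 : ZMod ℓ)] := rfl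

lemma θ_inj : Function.Injective (θ ℓ) := by
  intro p q h
  have hm := congrArg mat h
  rw [mat_θ, mat_θ] at hm
  have h00 : (p.1 : ZMod ℓ) = q.1 := by
    have := congrFun (congrFun hm 0) 0; simpa using this
  have h01 : (p.1 : ZMod ℓ) * p.2.toAdd = q.1 * q.2.toAdd := by
    have := congrFun (congrFun hm 0) 1; simpa using this
  have hu : p.1 = q.1 := Units.ext h00
  have hb : p.2.toAdd = q.2.toAdd := by
    rw [← hu] at h01
    exact mul_left_cancel₀ (Units.ne_zero p.1) h01
  exact Prod.ext hu (by exact hb)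

lemma card_GL2 : Nat.card (GL2 ℓ) = (ℓ ^ 2 - 1) * (ℓ ^ 2 - ℓ) := by
  have := Matrix.card_GL_field (𝔽 := ZMod ℓ) (n := 2)
  rw [this, Fin.prod_univ_two]
  simp [ZMod.card]

/-- diagonal character of a subgroup contained in the ramified Cartan -/
def ψ (H : Subgroup (GL2 ℓ)) (hcr : ∀ g ∈ H, g ∈ CrSet ℓ) : H →* (ZMod ℓ)ˣ where
  toFun h := ⟨mat (h : GL2 ℓ) 0 0, mat ((h : GL2 ℓ)⁻¹) 0 0,
    (cr_inv (hcr h h.2)).2.2,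
    by rw [mul_comm]; exact (cr_inv (hcr h h.2)).2.2⟩
  map_one' := by
    refine Units.ext ?_
    show mat (1 : GL2 ℓ) 0 0 = 1
    rw [mat_one, Matrix.one_apply_eq]
  map_mul' h₁ h₂ := by
    refine Units.ext ?_
    show mat ((h₁ : GL2 ℓ) * (h₂ : GL2 ℓ)) 0 0 = mat (h₁ : GL2 ℓ) 0 0 * mat (h₂ : GL2 ℓ) 0 0
    rw [mat_mul, mul_entries, (hcr h₂ h₂.2).1, mul_zero, add_zero]

lemma mem_ker_ψ {H : Subgroup (GL2 ℓ)} {hcr : ∀ g ∈ H, g ∈ CrSet ℓ} (h : H) :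
    h ∈ (ψ H hcr).ker ↔ mat (h : GL2 ℓ) 0 0 = 1 := by
  rw [MonoidHom.mem_ker, Units.ext_iff]
  rfl

lemma card_of_cr (H : Subgroup (GL2 ℓ)) (hl3 : 3 ≤ ℓ)
    (hcr : ∀ g ∈ H, g ∈ CrSet ℓ) (hnZ : ¬ ConjSub H (ZSet ℓ)) :
    ∃ e, e ∣ ℓ - 1 ∧ 0 < e ∧ Nat.card H = e * ℓ := by
  have hprime : ℓ.Prime := Fact.out
  -- the additive character on the kernel
  set K := (ψ H hcr).ker with hK
  have hker11 : ∀ k : K, mat ((k : H) : GL2 ℓ) 1 1 = 1 := fun k =>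
    ((hcr _ (k : H).2).2).symm.trans ((mem_ker_ψ (k : H)).mp k.2)
  let χ : K →* Multiplicative (ZMod ℓ) :=
  { toFun := fun k => Multiplicative.ofAdd (mat ((k : H) : GL2 ℓ) 0 1)
    map_one' := by
      show Multiplicative.ofAdd (mat (1 : GL2 ℓ) 0 1) = 1
      rw [mat_one, Matrix.one_apply_ne (by decide)]
      exact ofAdd_zero
    map_mul' := fun k₁ k₂ => by
      show Multiplicative.ofAdd (mat (((k₁ : H) : GL2 ℓ) * ((k₂ : H) : GL2 ℓ)) 0 1) = _
      rw [mat_mul, mul_entries, (mem_ker_ψ (k₁ : H)).mp k₁.2, hker11 k₂, one_mul, mul_one,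
        ← ofAdd_add, add_comm] }
  have hχ : Function.Injective χ := by
    refine (injective_iff_map_eq_one χ).mpr fun k hk => ?_
    have h01 : mat ((k : H) : GL2 ℓ) 0 1 = 0 := by
      have := congrArg Multiplicative.toAdd hk
      simpa [χ] using this
    have hM : mat ((k : H) : GL2 ℓ) = 1 := by
      rw [Matrix.eta_fin_two (mat ((k : H) : GL2 ℓ)), (mem_ker_ψ (k : H)).mp k.2, h01,
        (hcr _ (k : H).2).1, hker11 k, Matrix.one_fin_two]
    have : ((k : H) : GL2 ℓ) = 1 := Units.ext hM
    exact Subtype.ext (Subtype.ext this)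
  -- card of kernel divides ℓ
  have hcard_le : Nat.card K ∣ ℓ := by
    have h1 : Nat.card K = Nat.card χ.range :=
      Nat.card_congr (MulEquiv.toEquiv (MonoidHom.ofInjective hχ))
    have h2 : Nat.card χ.range ∣ Nat.card (Multiplicative (ZMod ℓ)) :=
      Subgroup.card_subgroup_dvd_card _
    have h3 : Nat.card (Multiplicative (ZMod ℓ)) = ℓ := by
      rw [Nat.card_congr Multiplicative.toAdd, Nat.card_zmod]
    rw [h1]; rw [h3] at h2; exact h2
  -- produce a nontrivial element of the kernel
  obtain ⟨g, hgH, hb⟩ : ∃ g ∈ H, mat g 0 1 ≠ 0 := by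
    by_contra hall
    push_neg at hall
    apply hnZ
    refine ⟨1, fun g hg => ?_⟩
    rw [one_mul, inv_one, mul_one]
    refine ⟨mat g 0 0, ?_⟩
    have hsc : (mat g 0 0) • (1 : Matrix (Fin 2) (Fin 2) (ZMod ℓ)) =
        !![mat g 0 0, 0; 0, mat g 0 0] := by
      rw [Matrix.eta_fin_two ((mat g 0 0) • (1 : Matrix (Fin 2) (Fin 2) (ZMod ℓ)))]
      simp [Matrix.one_apply]
    rw [hsc]
    conv_lhs => rw [Matrix.eta_fin_two (mat g)]
    rw [hall g hg, (hcr g hg).1, ← (hcr g hg).2]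
  have ha : mat g 0 0 ≠ 0 := left_ne_zero_of_mul_eq_one (cr_inv (hcr g hgH)).2.2
  have hmg : mat g = !![mat g 0 0, mat g 0 1; 0, mat g 0 0] := by
    conv_lhs => rw [Matrix.eta_fin_two (mat g)]
    rw [(hcr g hgH).1, ← (hcr g hgH).2]
  have hfl : (mat g 0 0) ^ (ℓ - 1) = 1 := ZMod.pow_card_sub_one_eq_one ha
  have hl1 : ℓ - 1 = (ℓ - 2) + 1 := by omega
  have hpow : mat (g ^ (ℓ - 1)) =
      !![1, ((ℓ - 1 : ℕ) : ZMod ℓ) * (mat g 0 0) ^ (ℓ - 2) * mat g 0 1; 0, 1] := by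
    conv_lhs => rw [mat_pow, hmg, hl1, tri_pow]
    rw [← hl1, hfl]
  have hcast : ((ℓ - 1 : ℕ) : ZMod ℓ) ≠ 0 := by
    rw [Nat.cast_sub hprime.one_le, Nat.cast_one, ZMod.natCast_self, zero_sub]
    exact neg_ne_zero.mpr one_ne_zero
  have hbne : ((ℓ - 1 : ℕ) : ZMod ℓ) * (mat g 0 0) ^ (ℓ - 2) * mat g 0 1 ≠ 0 :=
    mul_ne_zero (mul_ne_zero hcast (pow_ne_zero _ ha)) hb
  have humem : g ^ (ℓ - 1) ∈ H := H.pow_mem hgH _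
  have hukm : (⟨g ^ (ℓ - 1), humem⟩ : H) ∈ K := by
    rw [hK, mem_ker_ψ]
    show mat (g ^ (ℓ - 1)) 0 0 = 1
    rw [hpow]
    simp
  set u : K := ⟨⟨g ^ (ℓ - 1), humem⟩, hukm⟩ with hu
  have hu01 : mat (((u : H) : GL2 ℓ)) 0 1 ≠ 0 := by
    show mat (g ^ (ℓ - 1)) 0 1 ≠ 0
    rw [hpow]
    simpa using hbne
  have hne : u ≠ 1 := by
    intro h
    apply hu01
    rw [h]
    show mat (1 : GL2 ℓ) 0 1 = 0
    rw [mat_one, Matrix.one_apply_ne (by decide)]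
  have hKnt : Nontrivial K := ⟨u, 1, hne⟩
  have hKcard : Nat.card K = ℓ := by
    rcases hprime.eq_one_or_self_of_dvd _ hcard_le with h | h
    · exact absurd h (Nat.ne_of_gt (@Finite.one_lt_card K _ hKnt))
    · exact h
  -- conclude via the first isomorphism theorem
  have hsplit : Nat.card H = Nat.card (H ⧸ K) * Nat.card K :=
    Subgroup.card_eq_card_quotient_mul_card_subgroup K
  have hquot : Nat.card (H ⧸ K) = Nat.card (ψ H hcr).range :=
    Nat.card_congr (QuotientGroup.quotientKerEquivRange (ψ H hcr)).toEquiv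
  refine ⟨Nat.card (ψ H hcr).range, ?_, Nat.card_pos, ?_⟩
  · have hdvd := Subgroup.card_subgroup_dvd_card (ψ H hcr).range
    rwa [show Nat.card (ZMod ℓ)ˣ = ℓ - 1 from by
      rw [Nat.card_eq_fintype_card]; exact ZMod.card_units ℓ] at hdvd
  · rw [hsplit, hquot, hKcard]


end Aux

end Paper

theorem statement_1 (ℓ : ℕ) (hℓ : Nat.Prime ℓ) (hodd : Odd ℓ) :
    { n : ℕ | ∃ G : Subgroup (GL2 ℓ), Paper.BelongsCr G ∧ G.index = n } =
      { n : ℕ | 0 < n ∧ (ℓ ^ 2 - 1) ∣ n ∧ n ∣ (ℓ + 1) * (ℓ - 1) ^ 2 } := by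
  haveI : Fact ℓ.Prime := ⟨hℓ⟩
  have hne2 : ℓ ≠ 2 := by rintro rfl; exact (Nat.not_odd_iff_even.mpr (by decide)) hodd
  have hl3 : 3 ≤ ℓ := by have := hℓ.two_le; omega
  have hsq : ℓ ^ 2 - 1 = (ℓ + 1) * (ℓ - 1) := by
    obtain ⟨m, rfl⟩ := Nat.exists_eq_add_of_le hl3
    have e1 : (3 + m) ^ 2 = m * m + 6 * m + 9 := by ring
    have e2 : (3 + m + 1) * (3 + m - 1) = (4 + m) * (2 + m) := by congr 1 <;> omega
    have e3 : (4 + m) * (2 + m) = m * m + 6 * m + 8 := by ring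
    omega
  have hsql : ℓ ^ 2 - ℓ = ℓ * (ℓ - 1) := by
    obtain ⟨m, rfl⟩ := Nat.exists_eq_add_of_le hl3
    have e1 : (3 + m) ^ 2 = m * m + 6 * m + 9 := by ring
    have e2 : (3 + m) * (3 + m - 1) = (3 + m) * (2 + m) := by congr 1 <;> omega
    have e3 : (3 + m) * (2 + m) = m * m + 5 * m + 6 := by ring
    omega
  have hcube : (ℓ + 1) * (ℓ - 1) ^ 2 = (ℓ ^ 2 - 1) * (ℓ - 1) := by
    rw [hsq, pow_two, ← mul_assoc]
  have hl2pos : 0 < ℓ ^ 2 - 1 := by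
    rw [hsq]; exact Nat.mul_pos (by omega) (by omega)
  ext n
  simp only [Set.mem_setOf_eq]
  constructor
  · rintro ⟨G, ⟨⟨a, haG⟩, hnZ⟩, rfl⟩
    set f := (MulAut.conj a).toMonoidHom with hf
    set H := G.map f with hH
    have hidx : H.index = G.index := by
      refine Subgroup.index_map_eq G (MulEquiv.surjective _) ?_
      intro x hx
      have hx1 : f x = 1 := hx
      have : x = 1 := (MulAut.conj a).injective (by rw [_root_.map_one]; exact hx1)
      rw [this]; exact G.one_mem
    have hcr : ∀ g ∈ H, g ∈ Paper.CrSet ℓ := by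
      rintro g ⟨g₀, hg₀, rfl⟩
      exact haG g₀ hg₀
    have hnZ' : ¬ Paper.ConjSub H (Paper.ZSet ℓ) := by
      rintro ⟨c, hc⟩
      apply hnZ
      refine ⟨c * a, fun g hg => ?_⟩
      have h2 := hc (f g) (Subgroup.mem_map_of_mem f hg)
      have h3 : c * (f g) * c⁻¹ = (c * a) * g * (c * a)⁻¹ := by
        show c * (a * g * a⁻¹) * c⁻¹ = _
        group
      rwa [h3] at h2
    obtain ⟨e, hedvd, hepos, hecard⟩ := Paper.card_of_cr H hl3 hcr hnZ'
    have hmul : H.index * Nat.card H = Nat.card (GL2 ℓ) := H.index_mul_card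
    rw [hecard, Paper.card_GL2, hidx] at hmul
    obtain ⟨fq, hfq⟩ := hedvd
    have hfqpos : 0 < fq := by
      rcases Nat.eq_zero_or_pos fq with h | h
      · rw [h, mul_zero] at hfq; omega
      · exact h
    have hGidx : G.index = (ℓ ^ 2 - 1) * fq := by
      have hrhs : (ℓ ^ 2 - 1) * (ℓ ^ 2 - ℓ) = ((ℓ ^ 2 - 1) * fq) * (e * ℓ) := by
        rw [hsql, hfq]; ring
      rw [hrhs] at hmul
      exact Nat.eq_of_mul_eq_mul_right (Nat.mul_pos hepos (by omega)) hmul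
    refine ⟨?_, ⟨fq, hGidx⟩, ?_⟩
    · rw [hGidx]; exact Nat.mul_pos hl2pos hfqpos
    · rw [hcube, hGidx]
      exact mul_dvd_mul_left _ (Dvd.intro_left e hfq.symm)
  · rintro ⟨hpos, ⟨k, rfl⟩, hdvd⟩
    have hkdvd : k ∣ ℓ - 1 := by
      rw [hcube] at hdvd
      exact (mul_dvd_mul_iff_left (a := ℓ ^ 2 - 1) (by omega)).mp hdvd
    have hkpos : 0 < k := by
      rcases Nat.eq_zero_or_pos k with h | h
      · subst h; simp at hpos
      · exact h
    obtain ⟨g₀, hg₀⟩ := IsCyclic.exists_generator (α := (ZMod ℓ)ˣ)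
    have hord : orderOf g₀ = ℓ - 1 := by
      rw [orderOf_eq_card_of_forall_mem_zpowers hg₀, Nat.card_eq_fintype_card, ZMod.card_units]
    set d := (ℓ - 1) / k with hd
    have hdk : k * d = ℓ - 1 := Nat.mul_div_cancel' hkdvd
    have hdpos : 0 < d := by
      rcases Nat.eq_zero_or_pos d with h | h
      · rw [h, mul_zero] at hdk; omega
      · exact h
    have hordk : orderOf (g₀ ^ k) = d := by
      rw [orderOf_pow, hord, Nat.gcd_eq_right hkdvd, hd]
    set A := Subgroup.zpowers (g₀ ^ k) with hA
    have hcardA : Nat.card A = d := by rw [Nat.card_zpowers, hordk]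
    set P := A.prod (⊤ : Subgroup (Multiplicative (ZMod ℓ))) with hP
    set G := P.map (Paper.θ ℓ) with hG
    have hcardP : Nat.card P = d * ℓ := by
      rw [Nat.card_congr (Subgroup.prodEquiv A ⊤).toEquiv, Nat.card_prod, hcardA,
        Nat.card_congr Subgroup.topEquiv.toEquiv, Nat.card_congr Multiplicative.toAdd,
        Nat.card_zmod]
    have hcardG : Nat.card G = d * ℓ := by
      rw [← hcardP]
      exact (Nat.card_congr (Subgroup.equivMapOfInjective P (Paper.θ ℓ) Paper.θ_inj).toEquiv).symm
    have hGcr : ∀ g ∈ G, g ∈ Paper.CrSet ℓ := by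
      rintro g ⟨p, hp, rfl⟩
      constructor
      · show Paper.mat (Paper.θ ℓ p) 1 0 = 0
        rw [Paper.mat_θ]; simp
      · show Paper.mat (Paper.θ ℓ p) 0 0 = Paper.mat (Paper.θ ℓ p) 1 1
        rw [Paper.mat_θ]; simp
    have hGnZ : ¬ Paper.ConjSub G (Paper.ZSet ℓ) := by
      rintro ⟨c, hc⟩
      have hmem : Paper.θ ℓ (1, Multiplicative.ofAdd 1) ∈ G :=
        Subgroup.mem_map_of_mem _ (Subgroup.mem_prod.mpr ⟨A.one_mem, trivial⟩)
      obtain ⟨x, hx⟩ := hc _ hmem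
      have hx2 := Paper.conj_scalar hx
      rw [Paper.mat_θ] at hx2
      have h01 := congrFun (congrFun hx2 0) 1
      simp [Matrix.one_apply] at h01
    refine ⟨G, ⟨⟨1, fun g hg => by rw [one_mul, inv_one, mul_one]; exact hGcr g hg⟩, hGnZ⟩, ?_⟩
    have hmul : G.index * Nat.card G = Nat.card (GL2 ℓ) := G.index_mul_card
    rw [hcardG, Paper.card_GL2] at hmul
    have hrhs : (ℓ ^ 2 - 1) * (ℓ ^ 2 - ℓ) = ((ℓ ^ 2 - 1) * k) * (d * ℓ) := by
      rw [hsql, ← hdk]; ring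
    rw [hrhs] at hmul
    exact Nat.eq_of_mul_eq_mul_right (Nat.mul_pos hdpos (by omega)) hmul
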